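/- Let k ≥ 1 and let A ∈ M_k(𝔽₂) be a symmetric matrix with A𝟏 = 0 and rank A = k-1, and let b ∈ 𝔽₂^k with 𝟏ᵀb = 0. Let D be the diagonal matrix with diagonal b. Then b ∈ Im A, and the kernel of the block matrix M = [[A+D, D],[D, A+D]] has exactly 4 elements, namely (0,0), (𝟏,𝟏), (d, d+𝟏), (d+𝟏, d) where Ad = b. -/
import Mathlib


open Matrix

/-- for symmetric A over 𝔽₂ with A𝟏 = 0, rank k-1, and
𝟏ᵀb = 0, one has b ∈ Im A, and the kernel of [[A+D, D],[D, A+D]] (D = diag b)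
has exactly the 4 elements (0,0), (𝟏,𝟏), (d,d+𝟏), (d+𝟏,d) where Ad = b. -/
theorem stmt11 (k : ℕ) (hk : 1 ≤ k) (A : Matrix (Fin k) (Fin k) (ZMod 2))
    (hsymm : A.IsSymm) (hA1 : A *ᵥ (fun _ => 1) = 0) (hrank : A.rank = k - 1)
    (b : Fin k → ZMod 2) (hb1 : ∑ i, b i = 0) :
    (∃ x, A *ᵥ x = b) ∧
    (∀ d : Fin k → ZMod 2, A *ᵥ d = b →
      ∀ v : Fin k ⊕ Fin k → ZMod 2,
        (Matrix.fromBlocks (A + Matrix.diagonal b) (Matrix.diagonal b)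
          (Matrix.diagonal b) (A + Matrix.diagonal b)) *ᵥ v = 0 ↔
        (v = 0 ∨ v = Sum.elim (fun _ => 1) (fun _ => 1) ∨
         v = Sum.elim d (d + fun _ => 1) ∨ v = Sum.elim (d + fun _ => 1) d)) ∧
    Set.ncard {v : Fin k ⊕ Fin k → ZMod 2 |
      (Matrix.fromBlocks (A + Matrix.diagonal b) (Matrix.diagonal b)
        (Matrix.diagonal b) (A + Matrix.diagonal b)) *ᵥ v = 0} = 4 := by
  classical
  have i0 : Fin k := ⟨0, hk⟩
  set one : Fin k → ZMod 2 := (fun _ => 1) with hone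
  have hzz : ∀ a : ZMod 2, a + a = 0 := by decide
  have h2 : ∀ z : Fin k → ZMod 2, z + z = 0 := fun z => funext fun i => hzz _
  have h2z : ∀ z : Fin k → ZMod 2, (2 : ℤ) • z = 0 := fun z => by
    rw [two_zsmul]; exact h2 z
  have hone_ne : one ≠ 0 := by
    intro h
    have := congrFun h i0
    simp [hone] at this
  -- kernel of A is {0, one}
  have hrankdef : Module.finrank (ZMod 2) (LinearMap.range A.mulVecLin) = k - 1 := hrank
  have hrn := LinearMap.finrank_range_add_finrank_ker A.mulVecLin
  rw [Module.finrank_fintype_fun_eq_card, Fintype.card_fin, hrankdef] at hrn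
  have hkerdim : Module.finrank (ZMod 2) (LinearMap.ker A.mulVecLin) = 1 := by omega
  have hone_mem : one ∈ LinearMap.ker A.mulVecLin := by
    simp only [LinearMap.mem_ker, Matrix.mulVecLin_apply]
    exact hA1
  have hspan : (Submodule.span (ZMod 2) {one}) = LinearMap.ker A.mulVecLin := by
    apply Submodule.eq_of_le_of_finrank_eq
    · rwa [Submodule.span_singleton_le_iff_mem]
    · rw [finrank_span_singleton hone_ne, hkerdim]
  have hker : ∀ x : Fin k → ZMod 2, A *ᵥ x = 0 ↔ (x = 0 ∨ x = one) := by
    intro x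
    constructor
    · intro hx
      have : x ∈ Submodule.span (ZMod 2) {one} := by
        rw [hspan]; simpa [LinearMap.mem_ker, Matrix.mulVecLin_apply] using hx
      rcases Submodule.mem_span_singleton.mp this with ⟨c, hc⟩
      have hc01 : c = 0 ∨ c = 1 := by
        have : ∀ a : ZMod 2, a = 0 ∨ a = 1 := by decide
        exact this c
      rcases hc01 with rfl | rfl
      · left; rw [← hc]; simp
      · right; rw [← hc]; simp
    · rintro (rfl | rfl)
      · simp
      · exact hA1
  -- column sums of A vanish
  have hcol : ∀ j, ∑ i, A i j = 0 := by
    intro j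
    have hrow := congrFun hA1 j
    simp only [Matrix.mulVec, dotProduct, hone, mul_one, Pi.zero_apply] at hrow
    calc ∑ i, A i j = ∑ i, A j i := by
          refine Finset.sum_congr rfl fun i _ => ?_
          exact congrFun (congrFun hsymm j) i
      _ = 0 := hrow
  -- the sum functional
  let f : (Fin k → ZMod 2) →ₗ[ZMod 2] ZMod 2 :=
    { toFun := fun x => ∑ i, x i
      map_add' := by intro x y; simp [Finset.sum_add_distrib]
      map_smul' := by intro c x; simp [Finset.mul_sum] }
  have hfsurj : Function.Surjective f := by
    intro a
    refine ⟨fun j => if j = i0 then a else 0, ?_⟩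
    simp [f]
  have hfker : Module.finrank (ZMod 2) (LinearMap.ker f) = k - 1 := by
    have hh := LinearMap.finrank_range_add_finrank_ker f
    rw [Module.finrank_fintype_fun_eq_card, Fintype.card_fin,
      LinearMap.range_eq_top.mpr hfsurj, finrank_top, Module.finrank_self] at hh
    omega
  have hrange : LinearMap.range A.mulVecLin = LinearMap.ker f := by
    apply Submodule.eq_of_le_of_finrank_eq
    · rintro _ ⟨x, rfl⟩
      simp only [LinearMap.mem_ker, Matrix.mulVecLin_apply]
      show ∑ i, (A *ᵥ x) i = 0
      simp only [Matrix.mulVec, dotProduct]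
      rw [Finset.sum_comm]
      simp [← Finset.sum_mul, hcol]
    · rw [hrankdef, hfker]
  have hbmem : ∃ x, A *ᵥ x = b := by
    have : b ∈ LinearMap.ker f := by simpa [f] using hb1
    rw [← hrange] at this
    rcases this with ⟨x, hx⟩
    exact ⟨x, hx⟩
  -- D facts
  have hDone : Matrix.diagonal b *ᵥ one = b := by
    funext i; simp [Matrix.mulVec_diagonal, hone]
  -- the main iff
  have main : ∀ d : Fin k → ZMod 2, A *ᵥ d = b →
      ∀ v : Fin k ⊕ Fin k → ZMod 2,
        (Matrix.fromBlocks (A + Matrix.diagonal b) (Matrix.diagonal b)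
          (Matrix.diagonal b) (A + Matrix.diagonal b)) *ᵥ v = 0 ↔
        (v = 0 ∨ v = Sum.elim one one ∨
         v = Sum.elim d (d + one) ∨ v = Sum.elim (d + one) d) := by
    intro d hd v
    obtain ⟨x, y, rfl⟩ : ∃ x y, v = Sum.elim x y :=
      ⟨v ∘ Sum.inl, v ∘ Sum.inr, by funext i; cases i <;> rfl⟩
    rw [Matrix.fromBlocks_mulVec]
    simp only [Sum.elim_comp_inl, Sum.elim_comp_inr]
    have helim0 : (0 : Fin k ⊕ Fin k → ZMod 2) = Sum.elim (0 : Fin k → ZMod 2) (0 : Fin k → ZMod 2) := by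
      funext i; cases i <;> rfl
    have helim_inj : ∀ p q r s : Fin k → ZMod 2,
        Sum.elim p q = Sum.elim r s ↔ p = r ∧ q = s := by
      intro p q r s
      constructor
      · intro h
        exact ⟨funext fun i => congrFun h (Sum.inl i), funext fun i => congrFun h (Sum.inr i)⟩
      · rintro ⟨rfl, rfl⟩; rfl
    rw [helim0, helim_inj, helim_inj, helim_inj, helim_inj, helim_inj]
    constructor
    · rintro ⟨e1, e2⟩
      rw [Matrix.add_mulVec] at e1 e2
      have hsum : A *ᵥ (x + y) = 0 := by
        have h0 : (A *ᵥ x + Matrix.diagonal b *ᵥ x + Matrix.diagonal b *ᵥ y)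
            + (Matrix.diagonal b *ᵥ x + (A *ᵥ y + Matrix.diagonal b *ᵥ y)) = 0 := by
          rw [e1, e2, add_zero]
        rw [Matrix.mulVec_add, ← h0]
        abel_nf
        simp [h2z]
      rcases (hker _).mp hsum with hxy | hxy
      · -- y = x
        have hyx : y = x := by
          funext i
          have h' := congrFun hxy i
          simp only [Pi.add_apply, Pi.zero_apply] at h'
          revert h'; generalize x i = a; generalize y i = c; revert a c; decide
        rw [hyx] at e1 ⊢
        have hx0 : A *ᵥ x = 0 := by
          rw [← e1]
          abel_nf
          simp [h2z]
        rcases (hker _).mp hx0 with rfl | rfl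
        · left; exact ⟨rfl, rfl⟩
        · right; left; exact ⟨rfl, rfl⟩
      · -- x + y = one, so y = x + one
        have hyx : y = x + one := by
          funext i
          have h' := congrFun hxy i
          simp only [Pi.add_apply, hone] at h' ⊢
          revert h'; generalize x i = a; generalize y i = c; revert a c; decide
        rw [hyx] at e1 ⊢
        rw [Matrix.mulVec_add, hDone] at e1
        have hxb : A *ᵥ x = b := by
          have e1'' := congrArg (· + b) e1
          simp only [zero_add] at e1''
          rw [← e1'']
          abel_nf
          simp [h2z]
        have hxd : A *ᵥ (x + d) = 0 := by
          rw [Matrix.mulVec_add, hxb, hd, h2]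
        rcases (hker _).mp hxd with hx0 | hx1
        · have hxd' : x = d := by
            funext i
            have h' := congrFun hx0 i
            simp only [Pi.add_apply, Pi.zero_apply] at h'
            revert h'; generalize x i = a; generalize d i = c; revert a c; decide
          subst hxd'
          right; right; left; exact ⟨rfl, rfl⟩
        · have hxd' : x = d + one := by
            funext i
            have h' := congrFun hx1 i
            simp only [Pi.add_apply, hone] at h' ⊢
            revert h'; generalize x i = a; generalize d i = c; revert a c; decide
          subst hxd'
          right; right; right
          refine ⟨rfl, ?_⟩
          funext i
          simp only [Pi.add_apply, hone]
          generalize d i = a; revert a; decide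
    · -- reverse: check the four solutions
      have hAone : A *ᵥ one = 0 := hA1
      rintro (⟨h1, h2'⟩ | ⟨h1, h2'⟩ | ⟨h1, h2'⟩ | ⟨h1, h2'⟩) <;>
        subst h1 <;> subst h2' <;>
        refine ⟨?_, ?_⟩ <;>
        simp only [Matrix.add_mulVec, Matrix.mulVec_add, Matrix.mulVec_zero, hAone, hDone,
          hd, hA1, add_zero, zero_add] <;>
        first
          | rfl
          | (abel_nf; simp [h2z])
  obtain ⟨d, hd⟩ := hbmem
  refine ⟨⟨d, hd⟩, main, ?_⟩
  -- counting
  have hset : {v : Fin k ⊕ Fin k → ZMod 2 |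
      (Matrix.fromBlocks (A + Matrix.diagonal b) (Matrix.diagonal b)
        (Matrix.diagonal b) (A + Matrix.diagonal b)) *ᵥ v = 0} =
      {0, Sum.elim one one, Sum.elim d (d + one), Sum.elim (d + one) d} := by
    ext v
    simp only [Set.mem_setOf_eq, Set.mem_insert_iff, Set.mem_singleton_iff]
    exact main d hd v
  rw [hset]
  have pair : ∀ p q r s : Fin k → ZMod 2,
      ¬ (p i0 = r i0 ∧ q i0 = s i0) → Sum.elim p q ≠ Sum.elim r s := by
    intro p q r s h hh
    exact h ⟨congrFun hh (Sum.inl i0), congrFun hh (Sum.inr i0)⟩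
  have h00 : (0 : Fin k ⊕ Fin k → ZMod 2) = Sum.elim (0 : Fin k → ZMod 2) (0 : Fin k → ZMod 2) := by
    funext i; cases i <;> rfl
  have e01 : (0 : Fin k ⊕ Fin k → ZMod 2) ≠ Sum.elim one one := by
    rw [h00]; apply pair; simp [hone]
  have e02 : (0 : Fin k ⊕ Fin k → ZMod 2) ≠ Sum.elim d (d + one) := by
    rw [h00]; apply pair
    simp only [Pi.add_apply, Pi.zero_apply, hone]
    generalize d i0 = a; revert a; decide
  have e03 : (0 : Fin k ⊕ Fin k → ZMod 2) ≠ Sum.elim (d + one) d := by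
    rw [h00]; apply pair
    simp only [Pi.add_apply, Pi.zero_apply, hone]
    generalize d i0 = a; revert a; decide
  have e12 : Sum.elim one one ≠ Sum.elim d (d + one) := by
    apply pair
    simp only [Pi.add_apply, hone]
    generalize d i0 = a; revert a; decide
  have e13 : Sum.elim one one ≠ Sum.elim (d + one) d := by
    apply pair
    simp only [Pi.add_apply, hone]
    generalize d i0 = a; revert a; decide
  have e23 : Sum.elim d (d + one) ≠ Sum.elim (d + one) d := by
    apply pair
    simp only [Pi.add_apply, hone]
    generalize d i0 = a; revert a; decide
  rw [Set.ncard_insert_of_notMem (by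
      simp only [Set.mem_insert_iff, Set.mem_singleton_iff]
      push_neg
      exact ⟨e01, e02, e03⟩)]
  rw [Set.ncard_insert_of_notMem (by
      simp only [Set.mem_insert_iff, Set.mem_singleton_iff]
      push_neg
      exact ⟨e12, e13⟩)]
  rw [Set.ncard_pair e23]
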